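/- Let M be a full Hilbert C*-module over A and α: ℝ → U(M) a dynamical system with associated *-automorphisms α'_t of A (α_t(ax) = α'_t(a)α_t(x)). Then for every a ∈ A, α'_t(a) → a in norm as t → 0; hence α' is a C*-dynamical system (strongly continuous one-parameter group of *-automorphisms) on A. -/

import Mathlib

/-- The core axioms of a (left) Hilbert C*-module over a C*-algebra `A`: an `A`-valued
inner product `inn`, `A`-linear in the first variable, conjugate-symmetric via `star`,
and inducing the norm of `M`. -/
structure IsHilbertModule (A : Type*) {M : Type*} [CStarAlgebra A] [NormedAddCommGroup M]
    [NormedSpace ℂ M] [Module A M] [IsScalarTower ℂ A M] (inn : M → M → A) : Prop where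
  add_left : ∀ x y z : M, inn (x + y) z = inn x z + inn y z
  smul_left : ∀ (a : A) (x y : M), inn (a • x) y = a * inn x y
  star_inner : ∀ x y : M, star (inn x y) = inn y x
  norm_eq : ∀ x : M, ‖x‖ = Real.sqrt ‖inn x x‖

/-- A Hilbert C*-module is *full* if the closed linear span of the inner products is all
of `A`. -/
def IsFullModule (A : Type*) {M : Type*} [CStarAlgebra A] [NormedAddCommGroup M]
    [NormedSpace ℂ M] [Module A M] [IsScalarTower ℂ A M] (inn : M → M → A) : Prop :=
  Dense ((Submodule.span ℂ {a : A | ∃ x y : M, inn x y = a} : Submodule ℂ A) : Set A)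

open Filter Topology

section Helpers

variable {A M : Type*} [CStarAlgebra A] [NormedAddCommGroup M]
    [NormedSpace ℂ M] [Module A M] [IsScalarTower ℂ A M]
    {inn : M → M → A} (hM : IsHilbertModule A inn)

namespace IsHilbertModule
include hM

theorem csmul_left (c : ℂ) (x y : M) : inn (c • x) y = c • inn x y := by
  have h1 : c • x = (c • (1:A)) • x := by rw [smul_assoc, one_smul]
  rw [h1, hM.smul_left, smul_mul_assoc, one_mul]

theorem zero_left (y : M) : inn 0 y = 0 := by
  have := hM.smul_left 0 0 y
  simpa using this

theorem neg_left (x y : M) : inn (-x) y = - inn x y := by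
  have := hM.csmul_left (-1) x y
  simpa using this

theorem sub_left (x x' y : M) : inn (x - x') y = inn x y - inn x' y := by
  rw [sub_eq_add_neg, hM.add_left, hM.neg_left, sub_eq_add_neg]

theorem add_right (x y z : M) : inn x (y + z) = inn x y + inn x z := by
  have := congrArg star (hM.add_left y z x)
  rw [hM.star_inner] at this
  rw [this, star_add, hM.star_inner, hM.star_inner]

theorem csmul_right (c : ℂ) (x y : M) : inn x (c • y) = (starRingEnd ℂ c) • inn x y := by
  have := congrArg star (hM.csmul_left c y x)
  rw [hM.star_inner] at this
  rw [this, star_smul, hM.star_inner]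
  rfl

theorem norm_inn_self (x : M) : ‖inn x x‖ = ‖x‖ ^ 2 := by
  rw [hM.norm_eq x, Real.sq_sqrt (norm_nonneg _)]

theorem expand (c : ℂ) (x y : M) :
    inn (x + c • y) (x + c • y)
      = inn x x + (starRingEnd ℂ c) • inn x y + c • inn y x
        + (c * starRingEnd ℂ c) • inn y y := by
  simp only [hM.add_left, hM.add_right, hM.csmul_left, hM.csmul_right, smul_add, smul_smul]
  module

theorem polar (x y : M) :
    (4:ℂ) • inn x y
      = inn (x + y) (x + y) + Complex.I • inn (x + Complex.I • y) (x + Complex.I • y)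
        - inn (x - y) (x - y) - Complex.I • inn (x - Complex.I • y) (x - Complex.I • y) := by
  have h1 : x + y = x + (1:ℂ) • y := by rw [one_smul]
  have h2 : x - y = x + (-1:ℂ) • y := by rw [neg_smul, one_smul, sub_eq_add_neg]
  have h3 : x - Complex.I • y = x + (-Complex.I) • y := by rw [neg_smul, sub_eq_add_neg]
  rw [h1, h2, h3, hM.expand, hM.expand, hM.expand, hM.expand]
  simp only [map_one, map_neg, Complex.conj_I, one_smul, neg_smul, neg_neg, mul_one,
    Complex.I_mul_I, neg_mul, mul_neg]
  match_scalars <;> simp [Complex.I_sq] <;> ring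

theorem norm_inn_le_sq (x y : M) : ‖inn x y‖ ≤ (‖x‖ + ‖y‖) ^ 2 := by
  have h4 : ‖(4:ℂ) • inn x y‖ = 4 * ‖inn x y‖ := by
    rw [norm_smul]; norm_num
  have hb : ∀ c : ℂ, ‖c‖ = 1 → ‖inn (x + c • y) (x + c • y)‖ ≤ (‖x‖ + ‖y‖)^2 := by
    intro c hc
    rw [hM.norm_inn_self]
    have : ‖x + c • y‖ ≤ ‖x‖ + ‖y‖ := by
      calc ‖x + c • y‖ ≤ ‖x‖ + ‖c • y‖ := norm_add_le _ _
        _ = ‖x‖ + ‖y‖ := by rw [norm_smul, hc, one_mul]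
    exact pow_le_pow_left₀ (norm_nonneg _) this 2
  have key := hM.polar x y
  have hIn : ‖Complex.I‖ = 1 := Complex.norm_I
  have h1 : x + y = x + (1:ℂ) • y := by rw [one_smul]
  have h2 : x - y = x + (-1:ℂ) • y := by rw [neg_smul, one_smul, sub_eq_add_neg]
  have h3 : x - Complex.I • y = x + (-Complex.I) • y := by rw [neg_smul, sub_eq_add_neg]
  have hle : ‖(4:ℂ) • inn x y‖ ≤ 4 * (‖x‖ + ‖y‖)^2 := by
    rw [key]
    calc ‖inn (x + y) (x + y) + Complex.I • inn (x + Complex.I • y) (x + Complex.I • y)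
        - inn (x - y) (x - y) - Complex.I • inn (x - Complex.I • y) (x - Complex.I • y)‖
        ≤ ‖inn (x + y) (x + y)‖ + ‖Complex.I • inn (x + Complex.I • y) (x + Complex.I • y)‖
          + ‖inn (x - y) (x - y)‖ + ‖Complex.I • inn (x - Complex.I • y) (x - Complex.I • y)‖ := by
          apply (norm_sub_le _ _).trans
          gcongr
          apply (norm_sub_le _ _).trans
          gcongr
          exact norm_add_le _ _
      _ ≤ (‖x‖ + ‖y‖)^2 + (‖x‖ + ‖y‖)^2 + (‖x‖ + ‖y‖)^2 + (‖x‖ + ‖y‖)^2 := by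
          gcongr
          · rw [h1]; exact hb 1 (by norm_num)
          · rw [norm_smul, hIn, one_mul]; exact hb Complex.I hIn
          · rw [h2]; exact hb (-1) (by norm_num)
          · rw [norm_smul, hIn, one_mul, h3]; exact hb (-Complex.I) (by rw [norm_neg]; exact hIn)
      _ = 4 * (‖x‖ + ‖y‖)^2 := by ring
  rw [h4] at hle
  linarith

theorem norm_inn_le (x y : M) : ‖inn x y‖ ≤ ‖x‖ * (1 + ‖y‖) ^ 2 := by
  rcases eq_or_ne x 0 with rfl | hx
  · simp [hM.zero_left]
  · have hxn : (0:ℝ) < ‖x‖ := norm_pos_iff.mpr hx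
    set u : M := ((‖x‖⁻¹ : ℝ) : ℂ) • x with hu
    have hun : ‖u‖ = 1 := by
      rw [hu, norm_smul]
      simp [abs_of_pos hxn, inv_mul_cancel₀ hxn.ne']
    have hxu : x = ((‖x‖ : ℝ) : ℂ) • u := by
      rw [hu, smul_smul, ← Complex.ofReal_mul, mul_inv_cancel₀ hxn.ne']
      simp
    calc ‖inn x y‖ = ‖(((‖x‖ : ℝ) : ℂ)) • inn u y‖ := by
          conv_lhs => rw [hxu, hM.csmul_left]
      _ = ‖x‖ * ‖inn u y‖ := by rw [norm_smul]; simp [abs_of_pos hxn]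
      _ ≤ ‖x‖ * (‖u‖ + ‖y‖)^2 := by gcongr; exact hM.norm_inn_le_sq u y
      _ = ‖x‖ * (1 + ‖y‖)^2 := by rw [hun]

end IsHilbertModule

theorem dynamical_system_induced_strong_continuity' {A M : Type*} [CStarAlgebra A]
    [NormedAddCommGroup M] [NormedSpace ℂ M] [Module A M] [IsScalarTower ℂ A M]
    [IsBoundedSMul A M]
    (innM : M → M → A) (hM : IsHilbertModule A innM)
    (hfull : Dense ((Submodule.span ℂ {a : A | ∃ x y : M, innM x y = a} : Submodule ℂ A) : Set A))
    (α : ℝ → M → M) (α' : ℝ → A → A)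
    (hαcont : ∀ x : M, Tendsto (fun t : ℝ => α t x) (𝓝 0) (𝓝 x))
    (hmod : ∀ (t : ℝ) (a : A) (x : M), α t (a • x) = α' t a • α t x)
    (hα'iso : ∀ (t : ℝ) (a : A), ‖α' t a‖ = ‖a‖) :
    ∀ a : A, Tendsto (fun t : ℝ => α' t a) (𝓝 0) (𝓝 a) := by
  intro a
  -- Step A: strong convergence on the module
  have hstrong : ∀ x : M, Tendsto (fun t : ℝ => α' t a • x) (𝓝 0) (𝓝 (a • x)) := by
    intro x
    rw [tendsto_iff_norm_sub_tendsto_zero]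
    have hbound : ∀ t : ℝ,
        ‖α' t a • x - a • x‖ ≤ ‖a‖ * ‖x - α t x‖ + ‖α t (a • x) - a • x‖ := by
      intro t
      have hdecomp : α' t a • x - a • x = α' t a • (x - α t x) + (α t (a • x) - a • x) := by
        rw [smul_sub, ← hmod]; abel
      rw [hdecomp]
      calc ‖α' t a • (x - α t x) + (α t (a • x) - a • x)‖
          ≤ ‖α' t a • (x - α t x)‖ + ‖α t (a • x) - a • x‖ := norm_add_le _ _
        _ ≤ ‖α' t a‖ * ‖x - α t x‖ + ‖α t (a • x) - a • x‖ := by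
            gcongr; exact norm_smul_le _ _
        _ = ‖a‖ * ‖x - α t x‖ + ‖α t (a • x) - a • x‖ := by rw [hα'iso]
    apply squeeze_zero (fun t => norm_nonneg _) hbound
    have h1 : Tendsto (fun t : ℝ => ‖x - α t x‖) (𝓝 0) (𝓝 0) := by
      have := (tendsto_const_nhds (x := x) (f := 𝓝 (0:ℝ))).sub (hαcont x)
      simpa using this.norm
    have h2 : Tendsto (fun t : ℝ => ‖α t (a • x) - a • x‖) (𝓝 0) (𝓝 0) := by
      have := (hαcont (a • x)).sub (tendsto_const_nhds (x := a • x) (f := 𝓝 (0:ℝ)))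
      simpa using this.norm
    simpa using (h1.const_mul ‖a‖).add h2
  -- Step B,C: convergence of α' t a * b for b in the span of inner products
  have hspan : ∀ b ∈ Submodule.span ℂ {c : A | ∃ x y : M, innM x y = c},
      Tendsto (fun t : ℝ => α' t a * b) (𝓝 0) (𝓝 (a * b)) := by
    intro b hb
    induction hb using Submodule.span_induction with
    | mem c hc =>
        obtain ⟨x, y, rfl⟩ := hc
        rw [tendsto_iff_norm_sub_tendsto_zero]
        have heq : ∀ t : ℝ,
            α' t a * innM x y - a * innM x y = innM (α' t a • x - a • x) y := by
          intro t; rw [hM.sub_left, hM.smul_left, hM.smul_left]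
        apply squeeze_zero (g := fun t => ‖α' t a • x - a • x‖ * (1 + ‖y‖) ^ 2)
          (fun t => norm_nonneg _)
        · intro t; rw [heq]; exact hM.norm_inn_le _ _
        · have := hstrong x
          rw [tendsto_iff_norm_sub_tendsto_zero] at this
          simpa using this.mul_const ((1 + ‖y‖) ^ 2)
    | zero => simpa using (tendsto_const_nhds : Tendsto (fun _ : ℝ => (0:A)) _ _)
    | add u v hu hv ihu ihv =>
        have := ihu.add ihv
        simp only [← mul_add] at this
        exact this
    | smul c u hu ih =>
        have := ih.const_smul c
        simp only [← mul_smul_comm] at this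
        exact this
  -- Step D: pass to the limit using density and A unital
  rw [Metric.tendsto_nhds]
  intro ε hε
  set δ := ε / (3 * (‖a‖ + 1)) with hδdef
  have hδ : 0 < δ := by positivity
  obtain ⟨b, hbmem, hbdist⟩ := Metric.mem_closure_iff.mp (hfull (1:A)) δ hδ
  have hb := hspan b hbmem
  have hev := Metric.tendsto_nhds.mp hb (ε / 3) (by positivity)
  have haδ : (‖a‖ + 1) * δ = ε / 3 := by
    rw [hδdef]; field_simp
  have h1b : ‖(1:A) - b‖ < δ := by rwa [dist_eq_norm] at hbdist
  filter_upwards [hev] with t ht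
  have e1 : dist (α' t a) (α' t a * b) ≤ ‖a‖ * δ := by
    rw [dist_eq_norm]
    calc ‖α' t a - α' t a * b‖ = ‖α' t a * ((1:A) - b)‖ := by rw [mul_sub, mul_one]
      _ ≤ ‖α' t a‖ * ‖(1:A) - b‖ := norm_mul_le _ _
      _ = ‖a‖ * ‖(1:A) - b‖ := by rw [hα'iso]
      _ ≤ ‖a‖ * δ := mul_le_mul_of_nonneg_left (le_of_lt h1b) (norm_nonneg a)
  have e3 : dist (a * b) a ≤ ‖a‖ * δ := by
    rw [dist_eq_norm]
    calc ‖a * b - a‖ = ‖a * (b - (1:A))‖ := by rw [mul_sub, mul_one]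
      _ ≤ ‖a‖ * ‖b - (1:A)‖ := norm_mul_le _ _
      _ ≤ ‖a‖ * δ := by
          gcongr
          rw [← norm_neg]; simpa using le_of_lt h1b
  have htri : dist (α' t a) a ≤ dist (α' t a) (α' t a * b) + dist (α' t a * b) (a * b)
      + dist (a * b) a := dist_triangle4 _ _ _ _
  have haδ' : ‖a‖ * δ < ε / 3 := by
    calc ‖a‖ * δ < (‖a‖ + 1) * δ := by nlinarith
      _ = ε / 3 := haδ
  linarith [ht, e1, e3, htri]

end Helpers


/-- for a dynamical system `α` on a full Hilbert C*-module, the associated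
one-parameter group `α'` of *-automorphisms of `A` is strongly continuous:
`α'_t(a) → a` in norm as `t → 0`. -/
theorem dynamical_system_induced_strong_continuity {A M : Type*} [CStarAlgebra A]
    [NormedAddCommGroup M] [NormedSpace ℂ M] [Module A M] [IsScalarTower ℂ A M]
    [IsBoundedSMul A M]
    (innM : M → M → A) (hM : IsHilbertModule A innM) (hfull : IsFullModule A innM)
    (α : ℝ → M → M) (α' : ℝ → A → A)
    (hα0 : ∀ x : M, α 0 x = x)
    (hαgrp : ∀ t s : ℝ, ∀ x : M, α (t + s) x = α t (α s x))
    (hαsurj : ∀ t : ℝ, Function.Surjective (α t))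
    (hαiso : ∀ (t : ℝ) (x : M), ‖α t x‖ = ‖x‖)
    (hαcont : ∀ x : M, Tendsto (fun t : ℝ => α t x) (𝓝 0) (𝓝 x))
    (hinner : ∀ (t : ℝ) (x y : M), innM (α t x) (α t y) = α' t (innM x y))
    (hmod : ∀ (t : ℝ) (a : A) (x : M), α t (a • x) = α' t a • α t x)
    (hα'star : ∀ (t : ℝ) (a : A), α' t (star a) = star (α' t a))
    (hα'mul : ∀ (t : ℝ) (a b : A), α' t (a * b) = α' t a * α' t b)
    (hα'iso : ∀ (t : ℝ) (a : A), ‖α' t a‖ = ‖a‖) :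
    ∀ a : A, Tendsto (fun t : ℝ => α' t a) (𝓝 0) (𝓝 a) := by
  exact dynamical_system_induced_strong_continuity' innM hM hfull α α' hαcont hmod hα'iso
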